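/- For every simple d-regular bipartite graph G on [n]⊔[n] and every 1 ≤ k ≤ 𝔪, the number of multigraphs G' ∈ Cat_{n,d}(k) with G ∈ SN(G') is at least ((nd − Z(G) − 2kd³)^k / k!) · (d−1)^{2k} and at most C(nd, k) · (d−1)^{2k}, where C(nd,k) is the binomial coefficient. -/

import Mathlib

open Finset

/-- A bipartite multigraph on `[n] ⊔ [m]` encoded by its adjacency (multiplicity) matrix. -/
def IsReg (n d : ℕ) (A : Fin n → Fin n → ℕ) : Prop :=
  (∀ i, ∑ j, A i j = d) ∧ (∀ j, ∑ i, A i j = d)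

/-- A multigraph is simple if all multiplicities are at most one. -/
def IsSimpleG {n m : ℕ} (A : Fin n → Fin m → ℕ) : Prop := ∀ i j, A i j ≤ 1

/-- The simple switching `⟨i,i',j,j'⟩`: replace the edges `(i,j)` and `(i',j')` by
`(i,j')` and `(i',j)`. -/
def switchM {n m : ℕ} (A : Fin n → Fin m → ℕ) (i i' : Fin n) (j j' : Fin m) :
    Fin n → Fin m → ℕ :=
  fun a b =>
    if a = i ∧ b = j then A a b - 1
    else if a = i' ∧ b = j' then A a b - 1
    else if a = i ∧ b = j' then A a b + 1
    else if a = i' ∧ b = j then A a b + 1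
    else A a b

/-- Two multigraphs are adjacent if one is obtained from the other by a simple switching
operated on two non-incident edges. -/
def AdjacentM {n : ℕ} (A B : Fin n → Fin n → ℕ) : Prop :=
  ∃ i i' j j', i ≠ i' ∧ j ≠ j' ∧ 0 < A i j ∧ 0 < A i' j' ∧ B = switchM A i i' j j'

/-- `Cat_{n,d}(k)`: `d`-regular bipartite multigraphs with exactly `k` multiplicity-2 edges,
no two of them incident, and no multiplicities `≥ 3`. -/
def InCat (n d k : ℕ) (A : Fin n → Fin n → ℕ) : Prop :=
  IsReg n d A ∧ (∀ i j, A i j ≤ 2) ∧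
    (Finset.univ.filter fun p : Fin n × Fin n => A p.1 p.2 = 2).card = k ∧
    (∀ i j j', A i j = 2 → A i j' = 2 → j = j') ∧
    (∀ i i' j, A i j = 2 → A i' j = 2 → i = i')

/-- The set of multiedges (multiplicity-2 edges) of a multigraph. -/
def MEs {n : ℕ} (A : Fin n → Fin n → ℕ) : Finset (Fin n × Fin n) :=
  Finset.univ.filter fun p => A p.1 p.2 = 2

/-- The data of a simple path starting at a multigraph `A ∈ Cat_{n,d}(k)`: to each
multiedge `e = (i_s, j_s)` of `A` it assigns the auxiliary edge `f e = (i'_s, j'_s)` used by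
the corresponding simple switching `⟨i_s, i'_s, j_s, j'_s⟩`.  The auxiliary left (resp. right)
vertices are pairwise distinct, avoid all multiedge left (resp. right) vertices, and the
switching creates no multiple edges. -/
def SimplePathData {n : ℕ} (A : Fin n → Fin n → ℕ)
    (f : Fin n × Fin n → Fin n × Fin n) : Prop :=
  (∀ e ∈ MEs A, 0 < A (f e).1 (f e).2 ∧ A (f e).1 e.2 = 0 ∧ A e.1 (f e).2 = 0 ∧
    ∀ e' ∈ MEs A, (f e).1 ≠ e'.1 ∧ (f e).2 ≠ e'.2) ∧
  ∀ e ∈ MEs A, ∀ e' ∈ MEs A, e ≠ e' → (f e).1 ≠ (f e').1 ∧ (f e).2 ≠ (f e').2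

/-- The endpoint of the simple path with data `f` starting at `A`: each multiedge
`(i_s,j_s)` loses one parallel edge, the auxiliary edge `(i'_s,j'_s)` is removed, and the
edges `(i_s,j'_s)` and `(i'_s,j_s)` are added. -/
def endpointM {n : ℕ} (A : Fin n → Fin n → ℕ) (f : Fin n × Fin n → Fin n × Fin n) :
    Fin n → Fin n → ℕ :=
  fun a b =>
    A a b + ((MEs A).filter fun e => (a = e.1 ∧ b = (f e).2) ∨ (a = (f e).1 ∧ b = e.2)).card
      - ((MEs A).filter fun e => (a = e.1 ∧ b = e.2) ∨ (a = (f e).1 ∧ b = (f e).2)).card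

/-- The `s`-neighborhood of a multigraph: all endpoints of simple paths starting at it. -/
def SN {n : ℕ} (A : Fin n → Fin n → ℕ) : Set (Fin n → Fin n → ℕ) :=
  {B | ∃ f, SimplePathData A f ∧ B = endpointM A f}

/-- The anti-expansion measure `Z(G)` of a simple graph. -/
def Zae {n : ℕ} (A : Fin n → Fin n → ℕ) : ℕ :=
  (Finset.univ.filter fun p : Fin n × Fin n =>
    0 < A p.1 p.2 ∧ ∃ k, k ≠ p.1 ∧ 0 < A k p.2 ∧
      2 ≤ (Finset.univ.filter fun j => 0 < A p.1 j ∧ 0 < A k j).card).card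


section Generic
variable {α β γ : Type*} [Fintype α] [Fintype β] [Fintype γ] [DecidableEq α] [DecidableEq β] [DecidableEq γ]

lemma card_pair_le (P : α → Prop) (Q : α → β → Prop) [DecidablePred P]
    [∀ a, DecidablePred (Q a)] (dP dQ : ℕ) (hP : (univ.filter P).card ≤ dP)
    (hQ : ∀ a, (univ.filter (Q a)).card ≤ dQ) :
    ((univ : Finset (α × β)).filter fun x => P x.1 ∧ Q x.1 x.2).card ≤ dP * dQ := by
  have hsub : ((univ : Finset (α × β)).filter fun x => P x.1 ∧ Q x.1 x.2) ⊆
      (univ.filter P).biUnion fun a => ({a} : Finset α) ×ˢ univ.filter (Q a) := by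
    intro x hx
    simp only [mem_filter, mem_univ, true_and] at hx
    simp only [mem_biUnion, mem_filter, mem_univ, true_and, mem_product, mem_singleton]
    exact ⟨x.1, hx.1, rfl, hx.2⟩
  calc _ ≤ _ := card_le_card hsub
    _ ≤ ∑ a ∈ univ.filter P, (({a} : Finset α) ×ˢ univ.filter (Q a)).card :=
        card_biUnion_le
    _ ≤ ∑ _a ∈ univ.filter P, dQ := by
        refine sum_le_sum fun a _ => ?_
        rw [card_product, card_singleton, one_mul]; exact hQ a
    _ ≤ dP * dQ := by rw [sum_const, smul_eq_mul]; exact Nat.mul_le_mul_right _ hP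

lemma card_triple_le (P : α → Prop) (Q : α → β → Prop) (R : β → γ → Prop) [DecidablePred P]
    [∀ a, DecidablePred (Q a)] [∀ b, DecidablePred (R b)] (d : ℕ)
    (hP : (univ.filter P).card ≤ d) (hQ : ∀ a, (univ.filter (Q a)).card ≤ d)
    (hR : ∀ b, (univ.filter (R b)).card ≤ d) :
    ((univ : Finset (α × β × γ)).filter fun x => P x.1 ∧ Q x.1 x.2.1 ∧ R x.2.1 x.2.2).card ≤
      d * d * d := by
  have := card_pair_le (β := β × γ) P (fun a y => Q a y.1 ∧ R y.1 y.2) d (d * d) hP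
    (fun a => card_pair_le (Q a) (fun b c => R b c) d d (hQ a) hR)
  calc _ ≤ d * (d * d) := this
    _ = d * d * d := by ring

end Generic

section Deg
variable {n d : ℕ} {A : Fin n → Fin n → ℕ}

/-- Edges of a graph, as a finset of pairs. -/
def Edges (A : Fin n → Fin n → ℕ) : Finset (Fin n × Fin n) :=
  Finset.univ.filter fun p => 0 < A p.1 p.2

lemma rowcard (hreg : IsReg n d A) (hs : IsSimpleG A) (i : Fin n) :
    (univ.filter fun j => 0 < A i j).card = d := by
  rw [card_filter]
  rw [show ∑ j, (if 0 < A i j then 1 else 0) = ∑ j, A i j from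
    Finset.sum_congr rfl fun j _ => by have := hs i j; split <;> omega]
  exact hreg.1 i

lemma colcard (hreg : IsReg n d A) (hs : IsSimpleG A) (j : Fin n) :
    (univ.filter fun i => 0 < A i j).card = d := by
  rw [card_filter]
  rw [show ∑ i, (if 0 < A i j then 1 else 0) = ∑ i, A i j from
    Finset.sum_congr rfl fun i _ => by have := hs i j; split <;> omega]
  exact hreg.2 j

lemma rowcard_ne (hreg : IsReg n d A) (hs : IsSimpleG A) (i j : Fin n) (hij : 0 < A i j) :
    (univ.filter fun j' => 0 < A i j' ∧ j' ≠ j).card = d - 1 := by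
  have : (univ.filter fun j' => 0 < A i j' ∧ j' ≠ j) =
      (univ.filter fun j' => 0 < A i j').erase j := by
    ext x; simp [Finset.mem_erase, and_comm]
  rw [this, Finset.card_erase_of_mem (by simpa using hij), rowcard hreg hs]

lemma colcard_ne (hreg : IsReg n d A) (hs : IsSimpleG A) (i j : Fin n) (hij : 0 < A i j) :
    (univ.filter fun i' => 0 < A i' j ∧ i' ≠ i).card = d - 1 := by
  have : (univ.filter fun i' => 0 < A i' j ∧ i' ≠ i) =
      (univ.filter fun i' => 0 < A i' j).erase i := by
    ext x; simp [Finset.mem_erase, and_comm]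
  rw [this, Finset.card_erase_of_mem (by simpa using hij), colcard hreg hs]

lemma edges_card (hreg : IsReg n d A) (hs : IsSimpleG A) : (Edges A).card = n * d := by
  rw [Edges, card_filter, Fintype.sum_prod_type]
  rw [show ∑ i, ∑ j, (if 0 < A i j then 1 else 0) = ∑ i : Fin n, d from
    Finset.sum_congr rfl fun i _ => by
      rw [show ∑ j, (if 0 < A i j then 1 else 0) = ∑ j, A i j from
        Finset.sum_congr rfl fun j _ => by have := hs i j; split <;> omega]
      exact hreg.1 i]
  simp [Finset.card_univ, mul_comm]

/-- Good edges: edges not counted by the anti-expansion measure. -/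
def GoodE (A : Fin n → Fin n → ℕ) : Finset (Fin n × Fin n) :=
  Edges A \ (Finset.univ.filter fun p : Fin n × Fin n =>
    0 < A p.1 p.2 ∧ ∃ k, k ≠ p.1 ∧ 0 < A k p.2 ∧
      2 ≤ (Finset.univ.filter fun j => 0 < A p.1 j ∧ 0 < A k j).card)

lemma goodE_card (hreg : IsReg n d A) (hs : IsSimpleG A) :
    (GoodE A).card = n * d - Zae A := by
  rw [GoodE, Finset.card_sdiff_of_subset]
  · rw [edges_card hreg hs, Zae]
  · intro p hp
    simp only [mem_filter, mem_univ, true_and] at hp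
    simp [Edges, hp.1]

end Deg

section Quads
variable {n d : ℕ} {A : Fin n → Fin n → ℕ}

/-- Good switching quadruples `((i,j),(i',j'))`. -/
def GQuad (A : Fin n → Fin n → ℕ) : Finset ((Fin n × Fin n) × Fin n × Fin n) :=
  Finset.univ.filter fun q => q.1 ∈ GoodE A ∧
    (0 < A q.2.1 q.1.2 ∧ q.2.1 ≠ q.1.1) ∧ (0 < A q.1.1 q.2.2 ∧ q.2.2 ≠ q.1.2)

lemma gq_valid (hs : IsSimpleG A) {q : (Fin n × Fin n) × Fin n × Fin n} (hq : q ∈ GQuad A) :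
    A q.1.1 q.1.2 = 1 ∧ A q.1.1 q.2.2 = 1 ∧ A q.2.1 q.1.2 = 1 ∧ A q.2.1 q.2.2 = 0 ∧
      q.1.1 ≠ q.2.1 ∧ q.1.2 ≠ q.2.2 := by
  simp only [GQuad, mem_filter, mem_univ, true_and] at hq
  obtain ⟨hg, ⟨hi', hi'ne⟩, hj', hj'ne⟩ := hq
  simp only [GoodE, Finset.mem_sdiff, Edges, mem_filter, mem_univ, true_and] at hg
  obtain ⟨he, hz⟩ := hg
  have h0 : A q.2.1 q.2.2 = 0 := by
    by_contra h
    apply hz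
    refine ⟨he, q.2.1, hi'ne, hi', ?_⟩
    have hsub : ({q.1.2, q.2.2} : Finset (Fin n)) ⊆
        univ.filter fun j => 0 < A q.1.1 j ∧ 0 < A q.2.1 j := by
      intro x hx
      simp only [Finset.mem_insert, Finset.mem_singleton] at hx
      rcases hx with rfl | rfl <;> simp_all [Nat.pos_of_ne_zero]
    calc 2 = ({q.1.2, q.2.2} : Finset (Fin n)).card := by
            rw [Finset.card_insert_of_notMem (by simpa using hj'ne.symm)]; simp
      _ ≤ _ := card_le_card hsub
  have h1 := hs q.1.1 q.1.2
  have h2 := hs q.1.1 q.2.2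
  have h3 := hs q.2.1 q.1.2
  exact ⟨by omega, by omega, by omega, h0, hi'ne.symm, hj'ne.symm⟩

lemma gq_card_ge (hreg : IsReg n d A) (hs : IsSimpleG A) :
    (GoodE A).card * ((d - 1) * (d - 1)) ≤ (GQuad A).card := by
  have hsub : (GoodE A).biUnion (fun e => ({e} : Finset (Fin n × Fin n)) ×ˢ
      ((univ.filter fun i' => 0 < A i' e.2 ∧ i' ≠ e.1) ×ˢ
       (univ.filter fun j' => 0 < A e.1 j' ∧ j' ≠ e.2))) ⊆ GQuad A := by
    intro q hq
    simp only [mem_biUnion, mem_product, mem_singleton, mem_filter, mem_univ, true_and] at hq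
    obtain ⟨e, he, rfl, h1, h2⟩ := hq
    simp only [GQuad, mem_filter, mem_univ, true_and]
    exact ⟨he, h1, h2⟩
  refine le_trans ?_ (card_le_card hsub)
  rw [Finset.card_biUnion]
  · refine le_trans ?_ (le_refl _)
    have : ∀ e ∈ GoodE A, (({e} : Finset (Fin n × Fin n)) ×ˢ
        ((univ.filter fun i' => 0 < A i' e.2 ∧ i' ≠ e.1) ×ˢ
         (univ.filter fun j' => 0 < A e.1 j' ∧ j' ≠ e.2))).card = (d - 1) * (d - 1) := by
      intro e he
      have heE : 0 < A e.1 e.2 := by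
        simp only [GoodE, Finset.mem_sdiff, Edges, mem_filter, mem_univ, true_and] at he
        exact he.1
      rw [card_product, card_product, card_singleton, one_mul,
        colcard_ne hreg hs e.1 e.2 heE, rowcard_ne hreg hs e.1 e.2 heE]
    rw [Finset.sum_congr rfl this, sum_const, smul_eq_mul]
  · intro x _ y _ hxy
    simp only [Finset.disjoint_left]
    intro q hq hq'
    simp only [mem_product, mem_singleton] at hq hq'
    exact hxy (hq.1 ▸ hq'.1 ▸ rfl)

/-- Compatibility of two switching quadruples: all left (resp. right) vertices distinct. -/
def Compat {n : ℕ} (q r : (Fin n × Fin n) × Fin n × Fin n) : Prop :=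
  q.1.1 ≠ r.1.1 ∧ q.1.1 ≠ r.2.1 ∧ q.2.1 ≠ r.1.1 ∧ q.2.1 ≠ r.2.1 ∧
  q.1.2 ≠ r.1.2 ∧ q.1.2 ≠ r.2.2 ∧ q.2.2 ≠ r.1.2 ∧ q.2.2 ≠ r.2.2

instance {n : ℕ} : DecidableRel (Compat (n := n)) := fun _ _ => by
  unfold Compat; infer_instance

lemma compat_symm {n : ℕ} {q r : (Fin n × Fin n) × Fin n × Fin n} (h : Compat q r) :
    Compat r q := by
  obtain ⟨a, b, c, e, f, g, i, j⟩ := h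
  exact ⟨a.symm, c.symm, b.symm, e.symm, f.symm, i.symm, g.symm, j.symm⟩

lemma compat_irrefl {n : ℕ} (q : (Fin n × Fin n) × Fin n × Fin n) : ¬ Compat q q :=
  fun h => h.1 rfl

end Quads

section Blocked
variable {n d : ℕ} {A : Fin n → Fin n → ℕ}

lemma gq_mem {q : (Fin n × Fin n) × Fin n × Fin n} (hq : q ∈ GQuad A) :
    0 < A q.1.1 q.1.2 ∧ 0 < A q.2.1 q.1.2 ∧ 0 < A q.1.1 q.2.2 := by
  simp only [GQuad, mem_filter, mem_univ, true_and] at hq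
  obtain ⟨hg, ⟨hi', _⟩, hj', _⟩ := hq
  simp only [GoodE, Finset.mem_sdiff, Edges, mem_filter, mem_univ, true_and] at hg
  exact ⟨hg.1, hi', hj'⟩

lemma blocked_i (hreg : IsReg n d A) (hs : IsSimpleG A) (v : Fin n) :
    ((GQuad A).filter fun r => r.1.1 = v).card ≤ d * d * d := by
  have h := card_triple_le (fun j' : Fin n => 0 < A v j') (fun _ j => 0 < A v j)
    (fun j i' => 0 < A i' j) d (le_of_eq (rowcard hreg hs v))
    (fun _ => le_of_eq (rowcard hreg hs v)) (fun j => le_of_eq (colcard hreg hs j))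
  refine le_trans (Finset.card_le_card_of_injOn
    (fun r => (r.2.2, r.1.2, r.2.1)) ?_ ?_) h
  · intro r hr
    simp only [mem_coe, mem_filter] at hr
    obtain ⟨hg, hv⟩ := hr
    have := gq_mem hg
    simp only [mem_coe, mem_filter, mem_univ, true_and]
    exact ⟨hv ▸ this.2.2, hv ▸ this.1, this.2.1⟩
  · intro r hr r' hr' heq
    simp only [coe_filter, Set.mem_setOf_eq] at hr hr'
    simp only [Prod.mk.injEq] at heq
    have : r = ((v, r.1.2), (r.2.1, r.2.2)) := by rw [← hr.2]
    rw [this, heq.1, heq.2.1, heq.2.2, ← hr'.2]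

lemma blocked_i' (hreg : IsReg n d A) (hs : IsSimpleG A) (v : Fin n) :
    ((GQuad A).filter fun r => r.2.1 = v).card ≤ d * d * d := by
  have h := card_triple_le (fun j : Fin n => 0 < A v j) (fun j i => 0 < A i j)
    (fun i j' => 0 < A i j') d (le_of_eq (rowcard hreg hs v))
    (fun j => le_of_eq (colcard hreg hs j)) (fun i => le_of_eq (rowcard hreg hs i))
  refine le_trans (Finset.card_le_card_of_injOn
    (fun r => (r.1.2, r.1.1, r.2.2)) ?_ ?_) h
  · intro r hr
    simp only [mem_coe, mem_filter] at hr
    obtain ⟨hg, hv⟩ := hr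
    have := gq_mem hg
    simp only [mem_coe, mem_filter, mem_univ, true_and]
    exact ⟨hv ▸ this.2.1, this.1, this.2.2⟩
  · intro r hr r' hr' heq
    simp only [coe_filter, Set.mem_setOf_eq] at hr hr'
    simp only [Prod.mk.injEq] at heq
    have : r = ((r.1.1, r.1.2), (v, r.2.2)) := by rw [← hr.2]
    rw [this, heq.1, heq.2.1, heq.2.2, ← hr'.2]

lemma blocked_j (hreg : IsReg n d A) (hs : IsSimpleG A) (v : Fin n) :
    ((GQuad A).filter fun r => r.1.2 = v).card ≤ d * d * d := by
  have h := card_triple_le (fun i : Fin n => 0 < A i v) (fun i j' => 0 < A i j')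
    (fun _ i' => 0 < A i' v) d (le_of_eq (colcard hreg hs v))
    (fun i => le_of_eq (rowcard hreg hs i)) (fun _ => le_of_eq (colcard hreg hs v))
  refine le_trans (Finset.card_le_card_of_injOn
    (fun r => (r.1.1, r.2.2, r.2.1)) ?_ ?_) h
  · intro r hr
    simp only [mem_coe, mem_filter] at hr
    obtain ⟨hg, hv⟩ := hr
    have := gq_mem hg
    simp only [mem_coe, mem_filter, mem_univ, true_and]
    exact ⟨hv ▸ this.1, this.2.2, hv ▸ this.2.1⟩
  · intro r hr r' hr' heq
    simp only [coe_filter, Set.mem_setOf_eq] at hr hr'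
    simp only [Prod.mk.injEq] at heq
    have : r = ((r.1.1, v), (r.2.1, r.2.2)) := by rw [← hr.2]
    rw [this, heq.1, heq.2.1, heq.2.2, ← hr'.2]

lemma blocked_j' (hreg : IsReg n d A) (hs : IsSimpleG A) (v : Fin n) :
    ((GQuad A).filter fun r => r.2.2 = v).card ≤ d * d * d := by
  have h := card_triple_le (fun i : Fin n => 0 < A i v) (fun i j => 0 < A i j)
    (fun j i' => 0 < A i' j) d (le_of_eq (colcard hreg hs v))
    (fun i => le_of_eq (rowcard hreg hs i)) (fun j => le_of_eq (colcard hreg hs j))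
  refine le_trans (Finset.card_le_card_of_injOn
    (fun r => (r.1.1, r.1.2, r.2.1)) ?_ ?_) h
  · intro r hr
    simp only [mem_coe, mem_filter] at hr
    obtain ⟨hg, hv⟩ := hr
    have := gq_mem hg
    simp only [mem_coe, mem_filter, mem_univ, true_and]
    exact ⟨hv ▸ this.2.2, this.1, this.2.1⟩
  · intro r hr r' hr' heq
    simp only [coe_filter, Set.mem_setOf_eq] at hr hr'
    simp only [Prod.mk.injEq] at heq
    have : r = ((r.1.1, r.1.2), (r.2.1, v)) := by rw [← hr.2]
    rw [this, heq.1, heq.2.1, heq.2.2, ← hr'.2]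

lemma blocked_total (hreg : IsReg n d A) (hs : IsSimpleG A)
    (q : (Fin n × Fin n) × Fin n × Fin n) :
    ((GQuad A).filter fun r => ¬ Compat q r).card ≤ 8 * (d * d * d) := by
  classical
  set F1 := (GQuad A).filter fun r => r.1.1 = q.1.1
  set F2 := (GQuad A).filter fun r => r.2.1 = q.1.1
  set F3 := (GQuad A).filter fun r => r.1.1 = q.2.1
  set F4 := (GQuad A).filter fun r => r.2.1 = q.2.1
  set F5 := (GQuad A).filter fun r => r.1.2 = q.1.2
  set F6 := (GQuad A).filter fun r => r.2.2 = q.1.2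
  set F7 := (GQuad A).filter fun r => r.1.2 = q.2.2
  set F8 := (GQuad A).filter fun r => r.2.2 = q.2.2
  have hsub : ((GQuad A).filter fun r => ¬ Compat q r) ⊆
      F1 ∪ F2 ∪ F3 ∪ F4 ∪ F5 ∪ F6 ∪ F7 ∪ F8 := by
    intro r hr
    simp only [mem_filter] at hr
    obtain ⟨hg, hnc⟩ := hr
    simp only [Compat, not_and_or, not_ne_iff] at hnc
    simp only [F1, F2, F3, F4, F5, F6, F7, F8, Finset.mem_union, mem_filter]
    rcases hnc with h|h|h|h|h|h|h|h
    · exact Or.inl <| Or.inl <| Or.inl <| Or.inl <| Or.inl <| Or.inl <| Or.inl ⟨hg, h.symm⟩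
    · exact Or.inl <| Or.inl <| Or.inl <| Or.inl <| Or.inl <| Or.inl <| Or.inr ⟨hg, h.symm⟩
    · exact Or.inl <| Or.inl <| Or.inl <| Or.inl <| Or.inl <| Or.inr ⟨hg, h.symm⟩
    · exact Or.inl <| Or.inl <| Or.inl <| Or.inl <| Or.inr ⟨hg, h.symm⟩
    · exact Or.inl <| Or.inl <| Or.inl <| Or.inr ⟨hg, h.symm⟩
    · exact Or.inl <| Or.inl <| Or.inr ⟨hg, h.symm⟩
    · exact Or.inl <| Or.inr ⟨hg, h.symm⟩
    · exact Or.inr ⟨hg, h.symm⟩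
  have u2 : ∀ (s t : Finset ((Fin n × Fin n) × Fin n × Fin n)) (a b : ℕ),
      s.card ≤ a → t.card ≤ b → (s ∪ t).card ≤ a + b := fun s t a b h1 h2 =>
    le_trans (Finset.card_union_le _ _) (add_le_add h1 h2)
  have h1 := blocked_i hreg hs q.1.1
  have h2 := blocked_i' hreg hs q.1.1
  have h3 := blocked_i hreg hs q.2.1
  have h4 := blocked_i' hreg hs q.2.1
  have h5 := blocked_j hreg hs q.1.2
  have h6 := blocked_j' hreg hs q.1.2
  have h7 := blocked_j hreg hs q.2.2
  have h8 := blocked_j' hreg hs q.2.2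
  have := u2 _ _ _ _ (u2 _ _ _ _ (u2 _ _ _ _ (u2 _ _ _ _ (u2 _ _ _ _ (u2 _ _ _ _
    (u2 _ _ _ _ h1 h2) h3) h4) h5) h6) h7) h8
  refine le_trans (card_le_card hsub) (le_trans this (le_of_eq ?_))
  ring

end Blocked

section Greedy
variable {α : Type*} [Fintype α] [DecidableEq α]

lemma greedy (Q : Finset α) (C : α → α → Prop) [DecidableRel C]
    (hsym : ∀ a b, C a b → C b a) (hirr : ∀ a, ¬ C a a) (B : ℕ)
    (hB : ∀ a, (Q.filter fun b => ¬ C a b).card ≤ B) (k : ℕ) :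
    (Q.card - k * B) ^ k ≤ k.factorial *
      ((Q.powersetCard k).filter fun S => ∀ a ∈ S, ∀ b ∈ S, a ≠ b → C a b).card := by
  set N : ℕ → ℕ := fun m =>
    ((Q.powersetCard m).filter fun S => ∀ a ∈ S, ∀ b ∈ S, a ≠ b → C a b).card with hN
  suffices h : ∀ m, (Q.card - m * B) ^ m ≤ m.factorial * N m from h k
  intro m
  induction m with
  | zero => simp [N, Finset.powersetCard_zero, Finset.filter_singleton]
  | succ m ih =>
    -- key step : N m * (Q.card - m * B) ≤ (m+1) * N (m+1)
    have step : N m * (Q.card - m * B) ≤ (m + 1) * N (m + 1) := by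
      classical
      set 𝒮m := (Q.powersetCard m).filter fun S => ∀ a ∈ S, ∀ b ∈ S, a ≠ b → C a b with h𝒮m
      set T := 𝒮m.biUnion fun S =>
        ({S} : Finset (Finset α)) ×ˢ (Q.filter fun a => ∀ b ∈ S, C a b) with hT
      have hTcard : T.card = ∑ S ∈ 𝒮m, (Q.filter fun a => ∀ b ∈ S, C a b).card := by
        rw [hT, Finset.card_biUnion]
        · exact Finset.sum_congr rfl fun S _ => by
            rw [card_product, card_singleton, one_mul]
        · intro x _ y _ hxy
          simp only [Finset.disjoint_left]
          intro p hp hp'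
          simp only [mem_product, mem_singleton] at hp hp'
          exact hxy (hp.1 ▸ hp'.1 ▸ rfl)
      -- lower bound for each fiber
      have hfib : ∀ S ∈ 𝒮m, Q.card - m * B ≤ (Q.filter fun a => ∀ b ∈ S, C a b).card := by
        intro S hS
        simp only [h𝒮m, mem_filter, Finset.mem_powersetCard] at hS
        obtain ⟨⟨hSQ, hScard⟩, _⟩ := hS
        have hbad : (Q.filter fun a => ¬ ∀ b ∈ S, C a b) ⊆
            S.biUnion fun b => Q.filter fun a => ¬ C b a := by
          intro a ha
          simp only [mem_filter, not_forall] at ha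
          obtain ⟨haQ, b, hb, hnc⟩ := ha
          simp only [mem_biUnion, mem_filter]
          exact ⟨b, hb, haQ, fun h => hnc (hsym _ _ h)⟩
        have hbadcard : (Q.filter fun a => ¬ ∀ b ∈ S, C a b).card ≤ m * B := by
          refine le_trans (card_le_card hbad) (le_trans card_biUnion_le ?_)
          refine le_trans (Finset.sum_le_sum fun b _ => hB b) ?_
          rw [sum_const, smul_eq_mul, hScard]
        have := Finset.card_filter_add_card_filter_not
          (s := Q) (p := fun a => ∀ b ∈ S, C a b)
        omega
      have hlow : 𝒮m.card * (Q.card - m * B) ≤ T.card := by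
        rw [hTcard]
        calc 𝒮m.card * (Q.card - m * B) = ∑ _S ∈ 𝒮m, (Q.card - m * B) := by
              rw [sum_const, smul_eq_mul]
          _ ≤ _ := Finset.sum_le_sum hfib
      -- upper bound via the insert map
      have hmap : ∀ p ∈ T, (insert p.2 p.1 : Finset α) ∈
          (Q.powersetCard (m+1)).filter fun S => ∀ a ∈ S, ∀ b ∈ S, a ≠ b → C a b := by
        intro p hp
        simp only [hT, mem_biUnion, mem_product, mem_singleton] at hp
        obtain ⟨S, hS, hp1, hp2⟩ := hp
        simp only [mem_filter, mem_univ] at hp2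
        simp only [h𝒮m, mem_filter, Finset.mem_powersetCard] at hS
        obtain ⟨⟨hSQ, hScard⟩, hpair⟩ := hS
        have hnotmem : p.2 ∉ S := fun h => hirr p.2 (hp2.2 p.2 h)
        subst hp1
        simp only [mem_filter, Finset.mem_powersetCard]
        refine ⟨⟨?_, ?_⟩, ?_⟩
        · exact Finset.insert_subset hp2.1 hSQ
        · rw [Finset.card_insert_of_notMem hnotmem, hScard]
        · intro a ha b hb hab
          rcases Finset.mem_insert.1 ha with rfl | ha' <;>
            rcases Finset.mem_insert.1 hb with rfl | hb'
          · exact absurd rfl hab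
          · exact hp2.2 b hb'
          · exact hsym _ _ (hp2.2 a ha')
          · exact hpair a ha' b hb' hab
      have hfiber : ∀ S' ∈ T.image (fun p : Finset α × α => insert p.2 p.1),
          (T.filter fun p => insert p.2 p.1 = S').card ≤ m + 1 := by
        intro S' hS'
        have hcard' : S'.card = m + 1 := by
          simp only [Finset.mem_image] at hS'
          obtain ⟨p, hp, rfl⟩ := hS'
          have := hmap p hp
          simp only [mem_filter, Finset.mem_powersetCard] at this
          exact this.1.2
        refine le_trans (Finset.card_le_card_of_injOn (t := S') (fun p => p.2) ?_ ?_) ?_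
        · intro p hp
          simp only [mem_coe, mem_filter] at hp
          exact Finset.mem_coe.2 (hp.2 ▸ Finset.mem_insert_self p.2 p.1)
        · intro p hp p' hp' heq
          simp only [coe_filter, Set.mem_setOf_eq] at hp hp'
          obtain ⟨hpT, hpe⟩ := hp
          obtain ⟨hp'T, hp'e⟩ := hp'
          simp only [hT, mem_biUnion, mem_product, mem_singleton] at hpT hp'T
          obtain ⟨S, hS, h1, h2⟩ := hpT
          obtain ⟨S2, hS2, h1', h2'⟩ := hp'T
          simp only [mem_filter] at h2 h2'
          have hne : p.2 ∉ p.1 := by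
            subst h1
            exact fun h => hirr p.2 (h2.2 p.2 h)
          have hne' : p'.2 ∉ p'.1 := by
            subst h1'
            exact fun h => hirr p'.2 (h2'.2 p'.2 h)
          have heq2 : p.2 = p'.2 := heq
          have : p.1 = p'.1 := by
            have h3 : insert p.2 p.1 = insert p'.2 p'.1 := hpe.trans hp'e.symm
            rw [heq2] at h3
            have := congrArg (fun s => Finset.erase s p'.2) h3
            simpa [Finset.erase_insert (heq2 ▸ hne), Finset.erase_insert hne'] using this
          exact Prod.ext this heq
        · exact le_of_eq hcard'
      have hup : T.card ≤ (m + 1) * N (m + 1) := by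
        refine le_trans (Finset.card_le_mul_card_image _ (m+1) hfiber) ?_
        refine Nat.mul_le_mul_left _ (card_le_card ?_)
        intro S' hS'
        simp only [Finset.mem_image] at hS'
        obtain ⟨p, hp, rfl⟩ := hS'
        exact hmap p hp
      exact le_trans hlow hup
    calc (Q.card - (m+1) * B) ^ (m+1) = (Q.card - (m+1) * B) ^ m * (Q.card - (m+1) * B) :=
          pow_succ _ _
      _ ≤ (m.factorial * N m) * (Q.card - m * B) := by
          refine Nat.mul_le_mul ?_ (Nat.sub_le_sub_left (Nat.mul_le_mul_right _ (Nat.le_succ m)) _)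
          exact le_trans (Nat.pow_le_pow_left
            (Nat.sub_le_sub_left (Nat.mul_le_mul_right _ (Nat.le_succ m)) _) m) ih
      _ = m.factorial * (N m * (Q.card - m * B)) := by ring
      _ ≤ m.factorial * ((m + 1) * N (m + 1)) := Nat.mul_le_mul_left _ step
      _ = (m+1).factorial * N (m+1) := by rw [Nat.factorial_succ]; ring

end Greedy

section Build
variable {n d : ℕ} {A : Fin n → Fin n → ℕ}

/-- Positions gaining an edge. -/
def Pf {n : ℕ} (S : Finset ((Fin n × Fin n) × Fin n × Fin n)) (a b : Fin n) :
    Finset ((Fin n × Fin n) × Fin n × Fin n) :=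
  S.filter fun q => (a = q.1.1 ∧ b = q.1.2) ∨ (a = q.2.1 ∧ b = q.2.2)

/-- Positions losing an edge. -/
def Mf {n : ℕ} (S : Finset ((Fin n × Fin n) × Fin n × Fin n)) (a b : Fin n) :
    Finset ((Fin n × Fin n) × Fin n × Fin n) :=
  S.filter fun q => (a = q.1.1 ∧ b = q.2.2) ∨ (a = q.2.1 ∧ b = q.1.2)

/-- The multigraph built from a simple graph by doubling the edges of the quadruples in `S`. -/
def buildM {n : ℕ} (A : Fin n → Fin n → ℕ) (S : Finset ((Fin n × Fin n) × Fin n × Fin n)) :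
    Fin n → Fin n → ℕ :=
  fun a b => A a b + (Pf S a b).card - (Mf S a b).card

/-- Compatible family of good quadruples. -/
def GoodFam {n : ℕ} (A : Fin n → Fin n → ℕ)
    (S : Finset ((Fin n × Fin n) × Fin n × Fin n)) : Prop :=
  S ⊆ GQuad A ∧ ∀ q ∈ S, ∀ r ∈ S, q ≠ r → Compat q r

variable {S : Finset ((Fin n × Fin n) × Fin n × Fin n)}

lemma leftv_inj (hs : IsSimpleG A) (hG : GoodFam A S) {q r : (Fin n × Fin n) × Fin n × Fin n}
    (hq : q ∈ S) (hr : r ∈ S)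
    (h : q.1.1 = r.1.1 ∨ q.1.1 = r.2.1 ∨ q.2.1 = r.1.1 ∨ q.2.1 = r.2.1) : q = r := by
  by_contra hne
  have hc := hG.2 q hq r hr hne
  rcases h with h|h|h|h
  exacts [hc.1 h, hc.2.1 h, hc.2.2.1 h, hc.2.2.2.1 h]

lemma rightv_inj (hs : IsSimpleG A) (hG : GoodFam A S) {q r : (Fin n × Fin n) × Fin n × Fin n}
    (hq : q ∈ S) (hr : r ∈ S)
    (h : q.1.2 = r.1.2 ∨ q.1.2 = r.2.2 ∨ q.2.2 = r.1.2 ∨ q.2.2 = r.2.2) : q = r := by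
  by_contra hne
  have hc := hG.2 q hq r hr hne
  rcases h with h|h|h|h
  exacts [hc.2.2.2.2.1 h, hc.2.2.2.2.2.1 h, hc.2.2.2.2.2.2.1 h, hc.2.2.2.2.2.2.2 h]

lemma Pf_le_one (hs : IsSimpleG A) (hG : GoodFam A S) (a b : Fin n) :
    (Pf S a b).card ≤ 1 := by
  refine Finset.card_le_one.2 fun q hq r hr => ?_
  simp only [Pf, mem_filter] at hq hr
  refine leftv_inj hs hG hq.1 hr.1 ?_
  rcases hq.2 with ⟨h1, _⟩|⟨h1, _⟩ <;> rcases hr.2 with ⟨h2, _⟩|⟨h2, _⟩ <;>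
    simp [← h1, ← h2]

lemma Mf_le_one (hs : IsSimpleG A) (hG : GoodFam A S) (a b : Fin n) :
    (Mf S a b).card ≤ 1 := by
  refine Finset.card_le_one.2 fun q hq r hr => ?_
  simp only [Mf, mem_filter] at hq hr
  refine leftv_inj hs hG hq.1 hr.1 ?_
  rcases hq.2 with ⟨h1, _⟩|⟨h1, _⟩ <;> rcases hr.2 with ⟨h2, _⟩|⟨h2, _⟩ <;>
    simp [← h1, ← h2]

lemma Pf_Mf_not_both (hs : IsSimpleG A) (hG : GoodFam A S) (a b : Fin n) :
    (Pf S a b).card = 0 ∨ (Mf S a b).card = 0 := by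
  by_contra h
  push_neg at h
  obtain ⟨h1, h2⟩ := h
  obtain ⟨q, hq⟩ := Finset.card_pos.1 (Nat.pos_of_ne_zero h1)
  obtain ⟨r, hr⟩ := Finset.card_pos.1 (Nat.pos_of_ne_zero h2)
  simp only [Pf, Mf, mem_filter] at hq hr
  have hqr : q = r := by
    refine leftv_inj hs hG hq.1 hr.1 ?_
    rcases hq.2 with ⟨h1, _⟩|⟨h1, _⟩ <;> rcases hr.2 with ⟨h2, _⟩|⟨h2, _⟩ <;>
      simp [← h1, ← h2]
  subst hqr
  have hv := gq_valid hs (hG.1 hq.1)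
  rcases hq.2 with ⟨hi, hj⟩|⟨hi, hj⟩ <;> rcases hr.2 with ⟨hi', hj'⟩|⟨hi', hj'⟩
  · exact hv.2.2.2.2.2 (hj ▸ hj')
  · exact hv.2.2.2.2.1 (hi ▸ hi')
  · exact hv.2.2.2.2.1 (hi' ▸ hi)
  · exact hv.2.2.2.2.2 (hj' ▸ hj)

lemma Mf_pos_A (hs : IsSimpleG A) (hG : GoodFam A S) (a b : Fin n)
    (h : 0 < (Mf S a b).card) : A a b = 1 := by
  obtain ⟨q, hq⟩ := Finset.card_pos.1 h
  simp only [Mf, mem_filter] at hq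
  have hv := gq_valid hs (hG.1 hq.1)
  rcases hq.2 with ⟨hi, hj⟩|⟨hi, hj⟩
  · rw [hi, hj]; exact hv.2.1
  · rw [hi, hj]; exact hv.2.2.1

lemma build_key (hs : IsSimpleG A) (hG : GoodFam A S) (a b : Fin n) :
    buildM A S a b + (Mf S a b).card = A a b + (Pf S a b).card := by
  have h1 := Pf_le_one hs hG a b
  have h2 := Mf_le_one hs hG a b
  have h3 := Pf_Mf_not_both hs hG a b
  have h4 := Mf_pos_A hs hG a b
  simp only [buildM]
  omega

lemma build_vals (hs : IsSimpleG A) (hG : GoodFam A S)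
    {q : (Fin n × Fin n) × Fin n × Fin n} (hq : q ∈ S) :
    buildM A S q.1.1 q.1.2 = 2 ∧ buildM A S q.1.1 q.2.2 = 0 ∧
      buildM A S q.2.1 q.1.2 = 0 ∧ buildM A S q.2.1 q.2.2 = 1 := by
  have hv := gq_valid hs (hG.1 hq)
  refine ⟨?_, ?_, ?_, ?_⟩
  · have hP : 0 < (Pf S q.1.1 q.1.2).card :=
      Finset.card_pos.2 ⟨q, by simp [Pf, mem_filter, hq]⟩
    have h1 := Pf_le_one hs hG q.1.1 q.1.2
    have h3 := Pf_Mf_not_both hs hG q.1.1 q.1.2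
    have := build_key hs hG q.1.1 q.1.2
    omega
  · have hM : 0 < (Mf S q.1.1 q.2.2).card :=
      Finset.card_pos.2 ⟨q, by simp [Mf, mem_filter, hq]⟩
    have h2 := Mf_le_one hs hG q.1.1 q.2.2
    have h3 := Pf_Mf_not_both hs hG q.1.1 q.2.2
    have := build_key hs hG q.1.1 q.2.2
    have hA := hv.2.1
    omega
  · have hM : 0 < (Mf S q.2.1 q.1.2).card :=
      Finset.card_pos.2 ⟨q, by simp [Mf, mem_filter, hq]⟩
    have h2 := Mf_le_one hs hG q.2.1 q.1.2
    have h3 := Pf_Mf_not_both hs hG q.2.1 q.1.2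
    have := build_key hs hG q.2.1 q.1.2
    have hA := hv.2.2.1
    omega
  · have hP : 0 < (Pf S q.2.1 q.2.2).card :=
      Finset.card_pos.2 ⟨q, by simp [Pf, mem_filter, hq]⟩
    have h1 := Pf_le_one hs hG q.2.1 q.2.2
    have h3 := Pf_Mf_not_both hs hG q.2.1 q.2.2
    have := build_key hs hG q.2.1 q.2.2
    have hA := hv.2.2.2.1
    omega
end Build

section Build2
variable {n d : ℕ} {A : Fin n → Fin n → ℕ} {S : Finset ((Fin n × Fin n) × Fin n × Fin n)}

lemma build_le_two (hs : IsSimpleG A) (hG : GoodFam A S) (a b : Fin n) :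
    buildM A S a b ≤ 2 := by
  have h1 := Pf_le_one hs hG a b
  have h2 := hs a b
  simp only [buildM]
  omega

lemma MEs_build (hs : IsSimpleG A) (hG : GoodFam A S) :
    MEs (buildM A S) = S.image Prod.fst := by
  ext e
  simp only [MEs, mem_filter, mem_univ, true_and, Finset.mem_image]
  constructor
  · intro h2
    have h1 := Pf_le_one hs hG e.1 e.2
    have hkey := build_key hs hG e.1 e.2
    have hA := hs e.1 e.2
    have hM := Mf_le_one hs hG e.1 e.2
    have hPpos : (Pf S e.1 e.2).card = 1 := by omega
    obtain ⟨q, hq⟩ := Finset.card_pos.1 (by omega : 0 < (Pf S e.1 e.2).card)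
    simp only [Pf, mem_filter] at hq
    rcases hq.2 with ⟨hi, hj⟩|⟨hi, hj⟩
    · exact ⟨q, hq.1, by rw [Prod.ext_iff]; exact ⟨hi.symm, hj.symm⟩⟩
    · exfalso
      have hv := gq_valid hs (hG.1 hq.1)
      have := build_vals hs hG hq.1
      rw [hi, hj] at h2
      omega
  · rintro ⟨q, hq, rfl⟩
    exact (build_vals hs hG hq).1

lemma sum_row_disj {i i' j j' a : Fin n} (hne : i ≠ i') :
    (∑ b : Fin n, if (a = i ∧ b = j) ∨ (a = i' ∧ b = j') then (1:ℕ) else 0) =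
      (if a = i then 1 else 0) + (if a = i' then 1 else 0) := by
  by_cases h1 : a = i <;> by_cases h2 : a = i'
  · exact absurd (h1.symm.trans h2) hne
  · simp [h1, h2, hne, Ne.symm hne]
  · simp [h1, h2, hne, Ne.symm hne]
  · simp [h1, h2]

lemma sum_col_disj {i i' j j' b : Fin n} (hne : j ≠ j') :
    (∑ a : Fin n, if (a = i ∧ b = j) ∨ (a = i' ∧ b = j') then (1:ℕ) else 0) =
      (if b = j then 1 else 0) + (if b = j' then 1 else 0) := by
  by_cases h1 : b = j <;> by_cases h2 : b = j'
  · exact absurd (h1.symm.trans h2) hne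
  · simp [h1, h2, hne, Ne.symm hne, and_comm]
  · simp [h1, h2, hne, Ne.symm hne, and_comm]
  · simp [h1, h2]

lemma build_reg (hreg : IsReg n d A) (hs : IsSimpleG A) (hG : GoodFam A S) :
    IsReg n d (buildM A S) := by
  constructor
  · intro a
    have key : ∀ b, buildM A S a b + (Mf S a b).card = A a b + (Pf S a b).card :=
      build_key hs hG a
    have hsum : (∑ b, buildM A S a b) + ∑ b, (Mf S a b).card
        = (∑ b, A a b) + ∑ b, (Pf S a b).card := by
      rw [← Finset.sum_add_distrib, ← Finset.sum_add_distrib]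
      exact Finset.sum_congr rfl fun b _ => key b
    have hP : (∑ b, (Pf S a b).card) =
        ∑ q ∈ S, ((if a = q.1.1 then 1 else 0) + (if a = q.2.1 then 1 else 0)) := by
      simp only [Pf, card_filter]
      rw [Finset.sum_comm]
      exact Finset.sum_congr rfl fun q hq =>
        sum_row_disj (gq_valid hs (hG.1 hq)).2.2.2.2.1
    have hM : (∑ b, (Mf S a b).card) =
        ∑ q ∈ S, ((if a = q.1.1 then 1 else 0) + (if a = q.2.1 then 1 else 0)) := by
      simp only [Mf, card_filter]
      rw [Finset.sum_comm]
      exact Finset.sum_congr rfl fun q hq =>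
        sum_row_disj (gq_valid hs (hG.1 hq)).2.2.2.2.1
    rw [hreg.1 a, hP, hM] at hsum
    omega
  · intro b
    have key : ∀ a, buildM A S a b + (Mf S a b).card = A a b + (Pf S a b).card :=
      fun a => build_key hs hG a b
    have hsum : (∑ a, buildM A S a b) + ∑ a, (Mf S a b).card
        = (∑ a, A a b) + ∑ a, (Pf S a b).card := by
      rw [← Finset.sum_add_distrib, ← Finset.sum_add_distrib]
      exact Finset.sum_congr rfl fun a _ => key a
    have hP : (∑ a, (Pf S a b).card) =
        ∑ q ∈ S, ((if b = q.1.2 then 1 else 0) + (if b = q.2.2 then 1 else 0)) := by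
      simp only [Pf, card_filter]
      rw [Finset.sum_comm]
      exact Finset.sum_congr rfl fun q hq =>
        sum_col_disj (gq_valid hs (hG.1 hq)).2.2.2.2.2
    have hM : (∑ a, (Mf S a b).card) =
        ∑ q ∈ S, ((if b = q.1.2 then 1 else 0) + (if b = q.2.2 then 1 else 0)) := by
      simp only [Mf, card_filter]
      rw [Finset.sum_comm]
      refine Finset.sum_congr rfl fun q hq => ?_
      rw [sum_col_disj (Ne.symm (gq_valid hs (hG.1 hq)).2.2.2.2.2)]
      ring
    rw [hreg.2 b, hP, hM] at hsum
    omega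

end Build2

section Build3
variable {n d : ℕ} {A : Fin n → Fin n → ℕ} {S : Finset ((Fin n × Fin n) × Fin n × Fin n)}

lemma build_card_mes (hs : IsSimpleG A) (hG : GoodFam A S) :
    (MEs (buildM A S)).card = S.card := by
  rw [MEs_build hs hG]
  refine Finset.card_image_of_injOn fun q hq r hr heq => ?_
  exact leftv_inj hs hG hq hr (Or.inl (by rw [heq]))

lemma build_incat (hreg : IsReg n d A) (hs : IsSimpleG A) (hG : GoodFam A S) :
    InCat n d S.card (buildM A S) := by
  have hmes := MEs_build hs hG
  refine ⟨build_reg hreg hs hG, build_le_two hs hG, ?_, ?_, ?_⟩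
  · have := build_card_mes hs hG
    simpa [MEs] using this
  · intro i j j' h1 h2
    have hm1 : ((i, j) : Fin n × Fin n) ∈ MEs (buildM A S) := by simp [MEs, h1]
    have hm2 : ((i, j') : Fin n × Fin n) ∈ MEs (buildM A S) := by simp [MEs, h2]
    rw [hmes] at hm1 hm2
    simp only [Finset.mem_image] at hm1 hm2
    obtain ⟨q, hq, hq1⟩ := hm1
    obtain ⟨r, hr, hr1⟩ := hm2
    have : q = r := leftv_inj hs hG hq hr (Or.inl (by rw [hq1, hr1]))
    subst this
    exact congrArg Prod.snd (hq1.symm.trans hr1)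
  · intro i i' j h1 h2
    have hm1 : ((i, j) : Fin n × Fin n) ∈ MEs (buildM A S) := by simp [MEs, h1]
    have hm2 : ((i', j) : Fin n × Fin n) ∈ MEs (buildM A S) := by simp [MEs, h2]
    rw [hmes] at hm1 hm2
    simp only [Finset.mem_image] at hm1 hm2
    obtain ⟨q, hq, hq1⟩ := hm1
    obtain ⟨r, hr, hr1⟩ := hm2
    have : q = r := rightv_inj hs hG hq hr (Or.inl (by rw [hq1, hr1]))
    subst this
    exact congrArg Prod.fst (hq1.symm.trans hr1)

open Classical in
/-- The path data recovering `A` from the built multigraph. -/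
noncomputable def fOf {n : ℕ} (S : Finset ((Fin n × Fin n) × Fin n × Fin n)) :
    Fin n × Fin n → Fin n × Fin n := fun e =>
  if h : ∃ q ∈ S, q.1 = e then (Classical.choose h).2 else e

lemma fOf_spec (hs : IsSimpleG A) (hG : GoodFam A S)
    {q : (Fin n × Fin n) × Fin n × Fin n} (hq : q ∈ S) : fOf S q.1 = q.2 := by
  have h : ∃ r ∈ S, r.1 = q.1 := ⟨q, hq, rfl⟩
  rw [fOf, dif_pos h]
  obtain ⟨hmem, heq⟩ := Classical.choose_spec h
  have : Classical.choose h = q := leftv_inj hs hG hmem hq (Or.inl (by rw [heq]))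
  rw [this]

lemma build_spd (hs : IsSimpleG A) (hG : GoodFam A S) :
    SimplePathData (buildM A S) (fOf S) := by
  have hmes := MEs_build hs hG
  constructor
  · intro e he
    rw [hmes, Finset.mem_image] at he
    obtain ⟨q, hq, rfl⟩ := he
    rw [fOf_spec hs hG hq]
    have hv := gq_valid hs (hG.1 hq)
    have hb := build_vals hs hG hq
    refine ⟨by omega, hb.2.2.1, hb.2.1, ?_⟩
    intro e' he'
    rw [hmes, Finset.mem_image] at he'
    obtain ⟨r, hr, rfl⟩ := he'
    by_cases hqr : q = r
    · subst hqr
      exact ⟨fun h => hv.2.2.2.2.1 h.symm, fun h => hv.2.2.2.2.2 h.symm⟩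
    · have hc := hG.2 q hq r hr hqr
      exact ⟨hc.2.2.1, hc.2.2.2.2.2.2.1⟩
  · intro e he e' he' hne
    rw [hmes, Finset.mem_image] at he he'
    obtain ⟨q, hq, rfl⟩ := he
    obtain ⟨r, hr, rfl⟩ := he'
    have hqr : q ≠ r := fun h => hne (by rw [h])
    have hc := hG.2 q hq r hr hqr
    rw [fOf_spec hs hG hq, fOf_spec hs hG hr]
    exact ⟨hc.2.2.2.1, hc.2.2.2.2.2.2.2⟩

lemma build_endpoint (hs : IsSimpleG A) (hG : GoodFam A S) :
    A = endpointM (buildM A S) (fOf S) := by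
  have hmes := MEs_build hs hG
  have hinj : Set.InjOn Prod.fst (S : Set ((Fin n × Fin n) × Fin n × Fin n)) :=
    fun q hq r hr heq => leftv_inj hs hG hq hr (Or.inl (by rw [heq]))
  funext a b
  have hplus : ((MEs (buildM A S)).filter fun e =>
      (a = e.1 ∧ b = (fOf S e).2) ∨ (a = (fOf S e).1 ∧ b = e.2)).card = (Mf S a b).card := by
    rw [hmes, Finset.filter_image]
    rw [Finset.card_image_of_injOn (Set.InjOn.mono (Finset.coe_subset.2 (Finset.filter_subset _ _)) hinj)]
    congr 1
    refine Finset.filter_congr fun q hq => ?_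
    rw [fOf_spec hs hG hq]
  have hminus : ((MEs (buildM A S)).filter fun e =>
      (a = e.1 ∧ b = e.2) ∨ (a = (fOf S e).1 ∧ b = (fOf S e).2)).card = (Pf S a b).card := by
    rw [hmes, Finset.filter_image]
    rw [Finset.card_image_of_injOn (Set.InjOn.mono (Finset.coe_subset.2 (Finset.filter_subset _ _)) hinj)]
    congr 1
    refine Finset.filter_congr fun q hq => ?_
    rw [fOf_spec hs hG hq]
  have hkey := build_key hs hG a b
  simp only [endpointM, hplus, hminus]
  omega

lemma build_inj (hs : IsSimpleG A) {T : Finset ((Fin n × Fin n) × Fin n × Fin n)}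
    (hGS : GoodFam A S) (hGT : GoodFam A T) (h : buildM A S = buildM A T) : S = T := by
  have main : ∀ (S' T' : Finset ((Fin n × Fin n) × Fin n × Fin n)), GoodFam A S' →
      GoodFam A T' → buildM A S' = buildM A T' → S' ⊆ T' := by
    intro S' T' hG1 hG2 heq q hq
    have hv := gq_valid hs (hG1.1 hq)
    have hb := build_vals hs hG1 hq
    -- the multiedge of q is a multiedge of T'
    have hm : q.1 ∈ MEs (buildM A T') := by
      rw [← heq]
      simp [MEs, hb.1]
    rw [MEs_build hs hG2, Finset.mem_image] at hm
    obtain ⟨r, hr, hr1⟩ := hm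
    have hrv := gq_valid hs (hG2.1 hr)
    -- recover j'
    have hj' : q.2.2 = r.2.2 := by
      have h0 : buildM A T' q.1.1 q.2.2 = 0 := by rw [← heq]; exact hb.2.1
      have hA1 : A q.1.1 q.2.2 = 1 := hv.2.1
      have hMpos : 0 < (Mf T' q.1.1 q.2.2).card := by
        have hkey := build_key hs hG2 q.1.1 q.2.2
        have := Pf_le_one hs hG2 q.1.1 q.2.2
        omega
      obtain ⟨r', hr'⟩ := Finset.card_pos.1 hMpos
      simp only [Mf, mem_filter] at hr'
      rcases hr'.2 with ⟨hi, hj⟩|⟨hi, hj⟩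
      · have : r' = r := leftv_inj hs hG2 hr'.1 hr (Or.inl (by rw [← hi, ← hr1]))
        rw [hj, this]
      · exfalso
        have : r' = r := leftv_inj hs hG2 hr'.1 hr (Or.inr (Or.inr (Or.inl (by rw [← hi, ← hr1]))))
        subst this
        exact (gq_valid hs (hG2.1 hr'.1)).2.2.2.2.1 (by rw [← hi, ← hr1])
    -- recover i'
    have hi' : q.2.1 = r.2.1 := by
      have h0 : buildM A T' q.2.1 q.1.2 = 0 := by rw [← heq]; exact hb.2.2.1
      have hA1 : A q.2.1 q.1.2 = 1 := hv.2.2.1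
      have hMpos : 0 < (Mf T' q.2.1 q.1.2).card := by
        have hkey := build_key hs hG2 q.2.1 q.1.2
        have := Pf_le_one hs hG2 q.2.1 q.1.2
        omega
      obtain ⟨r', hr'⟩ := Finset.card_pos.1 hMpos
      simp only [Mf, mem_filter] at hr'
      rcases hr'.2 with ⟨hi, hj⟩|⟨hi, hj⟩
      · exfalso
        have : r' = r := rightv_inj hs hG2 hr'.1 hr (Or.inr (Or.inr (Or.inl (by rw [← hj, ← hr1]))))
        subst this
        exact (gq_valid hs (hG2.1 hr'.1)).2.2.2.2.2 (by rw [← hj, ← hr1])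
      · have : r' = r := rightv_inj hs hG2 hr'.1 hr (Or.inl (by rw [← hj, ← hr1]))
        rw [hi, this]
    have : q = r := by
      have h1 : q.1 = r.1 := hr1.symm
      rw [Prod.ext_iff]
      refine ⟨h1, ?_⟩
      rw [Prod.ext_iff]
      exact ⟨hi', hj'⟩
    exact this ▸ hr
  exact le_antisymm (main S T hGS hGT h) (main T S hGT hGS h.symm)

end Build3

section Upper
variable {n d k : ℕ} {A A' : Fin n → Fin n → ℕ} {f : Fin n × Fin n → Fin n × Fin n}

/-- Added-edge count for a path datum. -/
def M' {n : ℕ} (A' : Fin n → Fin n → ℕ) (f : Fin n × Fin n → Fin n × Fin n) (a b : Fin n) : ℕ :=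
  ((MEs A').filter fun e => (a = e.1 ∧ b = (f e).2) ∨ (a = (f e).1 ∧ b = e.2)).card

/-- Removed-edge count for a path datum. -/
def P' {n : ℕ} (A' : Fin n → Fin n → ℕ) (f : Fin n × Fin n → Fin n × Fin n) (a b : Fin n) : ℕ :=
  ((MEs A').filter fun e => (a = e.1 ∧ b = e.2) ∨ (a = (f e).1 ∧ b = (f e).2)).card

lemma leftv_inj' (hc : InCat n d k A') (hspd : SimplePathData A' f)
    {e r : Fin n × Fin n} (he : e ∈ MEs A') (hr : r ∈ MEs A')
    (h : e.1 = r.1 ∨ e.1 = (f r).1 ∨ (f e).1 = r.1 ∨ (f e).1 = (f r).1) : e = r := by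
  have hem : A' e.1 e.2 = 2 := by simpa [MEs] using he
  have hrm : A' r.1 r.2 = 2 := by simpa [MEs] using hr
  rcases h with h|h|h|h
  · have := hc.2.2.2.1 e.1 e.2 r.2 hem (h ▸ hrm)
    exact Prod.ext h this
  · exact absurd h.symm ((hspd.1 r hr).2.2.2 e he).1
  · exact absurd h ((hspd.1 e he).2.2.2 r hr).1
  · by_contra hne
    exact (hspd.2 e he r hr hne).1 h

lemma rightv_inj' (hc : InCat n d k A') (hspd : SimplePathData A' f)
    {e r : Fin n × Fin n} (he : e ∈ MEs A') (hr : r ∈ MEs A')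
    (h : e.2 = r.2 ∨ e.2 = (f r).2 ∨ (f e).2 = r.2 ∨ (f e).2 = (f r).2) : e = r := by
  have hem : A' e.1 e.2 = 2 := by simpa [MEs] using he
  have hrm : A' r.1 r.2 = 2 := by simpa [MEs] using hr
  rcases h with h|h|h|h
  · have := hc.2.2.2.2 e.1 r.1 e.2 hem (h ▸ hrm)
    exact Prod.ext this h
  · exact absurd h.symm ((hspd.1 r hr).2.2.2 e he).2
  · exact absurd h ((hspd.1 e he).2.2.2 r hr).2
  · by_contra hne
    exact (hspd.2 e he r hr hne).2 h

lemma P'_le_one (hc : InCat n d k A') (hspd : SimplePathData A' f) (a b : Fin n) :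
    P' A' f a b ≤ 1 := by
  refine Finset.card_le_one.2 fun e he r hr => ?_
  simp only [mem_filter] at he hr
  refine leftv_inj' hc hspd he.1 hr.1 ?_
  rcases he.2 with ⟨h1, _⟩|⟨h1, _⟩ <;> rcases hr.2 with ⟨h2, _⟩|⟨h2, _⟩ <;>
    simp [← h1, ← h2]

lemma M'_le_one (hc : InCat n d k A') (hspd : SimplePathData A' f) (a b : Fin n) :
    M' A' f a b ≤ 1 := by
  refine Finset.card_le_one.2 fun e he r hr => ?_
  simp only [mem_filter] at he hr
  refine leftv_inj' hc hspd he.1 hr.1 ?_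
  rcases he.2 with ⟨h1, _⟩|⟨h1, _⟩ <;> rcases hr.2 with ⟨h2, _⟩|⟨h2, _⟩ <;>
    simp [← h1, ← h2]

lemma P'_M'_not_both (hc : InCat n d k A') (hspd : SimplePathData A' f) (a b : Fin n) :
    P' A' f a b = 0 ∨ M' A' f a b = 0 := by
  by_contra h
  push_neg at h
  obtain ⟨h1, h2⟩ := h
  obtain ⟨e, he⟩ := Finset.card_pos.1 (Nat.pos_of_ne_zero h1)
  obtain ⟨r, hr⟩ := Finset.card_pos.1 (Nat.pos_of_ne_zero h2)
  simp only [mem_filter] at he hr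
  have her : e = r := by
    refine leftv_inj' hc hspd he.1 hr.1 ?_
    rcases he.2 with ⟨h1, _⟩|⟨h1, _⟩ <;> rcases hr.2 with ⟨h2, _⟩|⟨h2, _⟩ <;>
      simp [← h1, ← h2]
  subst her
  have hd1 := ((hspd.1 e he.1).2.2.2 e he.1).1
  have hd2 := ((hspd.1 e he.1).2.2.2 e he.1).2
  rcases he.2 with ⟨hi, hj⟩|⟨hi, hj⟩ <;> rcases hr.2 with ⟨hi', hj'⟩|⟨hi', hj'⟩
  · exact hd2 (hj' ▸ hj)
  · exact hd1 (hi' ▸ hi)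
  · exact hd1 (hi ▸ hi')
  · exact hd2 (hj ▸ hj')

lemma P'_pos_A' (hspd : SimplePathData A' f) (a b : Fin n)
    (h : 0 < P' A' f a b) : 0 < A' a b := by
  obtain ⟨e, he⟩ := Finset.card_pos.1 h
  simp only [mem_filter] at he
  rcases he.2 with ⟨hi, hj⟩|⟨hi, hj⟩
  · have : A' e.1 e.2 = 2 := by simpa [MEs] using he.1
    rw [hi, hj]; omega
  · rw [hi, hj]; exact (hspd.1 e he.1).1

lemma key' (hc : InCat n d k A') (hspd : SimplePathData A' f)
    (hend : A = endpointM A' f) (a b : Fin n) :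
    A a b + P' A' f a b = A' a b + M' A' f a b := by
  have h1 := P'_le_one hc hspd a b
  have h2 := P'_pos_A' hspd a b
  have : A a b = A' a b + M' A' f a b - P' A' f a b := by
    rw [hend]; rfl
  omega

lemma mes_edge (hc : InCat n d k A') (hspd : SimplePathData A' f)
    (hend : A = endpointM A' f) {e : Fin n × Fin n} (he : e ∈ MEs A') :
    A e.1 e.2 = 1 := by
  have hP : P' A' f e.1 e.2 = 1 := by
    have h1 := P'_le_one hc hspd e.1 e.2
    have : 0 < P' A' f e.1 e.2 :=
      Finset.card_pos.2 ⟨e, Finset.mem_filter.2 ⟨he, Or.inl ⟨rfl, rfl⟩⟩⟩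
    omega
  have hM : M' A' f e.1 e.2 = 0 := by
    rcases P'_M'_not_both hc hspd e.1 e.2 with h|h
    · omega
    · exact h
  have hA' : A' e.1 e.2 = 2 := by simpa [MEs] using he
  have := key' hc hspd hend e.1 e.2
  omega

lemma mes_aux_row (hc : InCat n d k A') (hspd : SimplePathData A' f)
    (hend : A = endpointM A' f) {e : Fin n × Fin n} (he : e ∈ MEs A') :
    0 < A e.1 (f e).2 ∧ (f e).2 ≠ e.2 := by
  have hM : 0 < M' A' f e.1 (f e).2 :=
    Finset.card_pos.2 ⟨e, Finset.mem_filter.2 ⟨he, Or.inl ⟨rfl, rfl⟩⟩⟩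
  have hP : P' A' f e.1 (f e).2 = 0 := by
    rcases P'_M'_not_both hc hspd e.1 (f e).2 with h|h
    · exact h
    · omega
  have := key' hc hspd hend e.1 (f e).2
  exact ⟨by omega, ((hspd.1 e he).2.2.2 e he).2⟩

lemma mes_aux_col (hc : InCat n d k A') (hspd : SimplePathData A' f)
    (hend : A = endpointM A' f) {e : Fin n × Fin n} (he : e ∈ MEs A') :
    0 < A (f e).1 e.2 ∧ (f e).1 ≠ e.1 := by
  have hM : 0 < M' A' f (f e).1 e.2 :=
    Finset.card_pos.2 ⟨e, Finset.mem_filter.2 ⟨he, Or.inr ⟨rfl, rfl⟩⟩⟩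
  have hP : P' A' f (f e).1 e.2 = 0 := by
    rcases P'_M'_not_both hc hspd (f e).1 e.2 with h|h
    · exact h
    · omega
  have := key' hc hspd hend (f e).1 e.2
  exact ⟨by omega, ((hspd.1 e he).2.2.2 e he).1⟩

lemma M'_pos_A (hc : InCat n d k A') (hspd : SimplePathData A' f)
    (hend : A = endpointM A' f) (a b : Fin n)
    (h : 0 < M' A' f a b) : 0 < A a b := by
  obtain ⟨e, he⟩ := Finset.card_pos.1 h
  simp only [mem_filter] at he
  rcases he.2 with ⟨hi, hj⟩|⟨hi, hj⟩
  · rw [hi, hj]; exact (mes_aux_row hc hspd hend he.1).1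
  · rw [hi, hj]; exact (mes_aux_col hc hspd hend he.1).1

lemma recover (hc : InCat n d k A') (hspd : SimplePathData A' f)
    (hend : A = endpointM A' f) (a b : Fin n) :
    A' a b = A a b + P' A' f a b - M' A' f a b := by
  have h1 := M'_le_one hc hspd a b
  have h2 := M'_pos_A hc hspd hend a b
  have := key' hc hspd hend a b
  omega

end Upper

section Final
variable {n d k : ℕ} {A : Fin n → Fin n → ℕ}

lemma psi_inj {A1 A2 : Fin n → Fin n → ℕ} {f1 f2 : Fin n × Fin n → Fin n × Fin n}
    (hc1 : InCat n d k A1) (hspd1 : SimplePathData A1 f1) (hend1 : A = endpointM A1 f1)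
    (hc2 : InCat n d k A2) (hspd2 : SimplePathData A2 f2) (hend2 : A = endpointM A2 f2)
    (hmes : MEs A1 = MEs A2) (hf : ∀ e ∈ MEs A1, f1 e = f2 e) : A1 = A2 := by
  have hP : ∀ a b, P' A1 f1 a b = P' A2 f2 a b := by
    intro a b
    unfold P'
    rw [← hmes]
    congr 1
    refine Finset.filter_congr fun e he => ?_
    rw [hf e he]
  have hM : ∀ a b, M' A1 f1 a b = M' A2 f2 a b := by
    intro a b
    unfold M'
    rw [← hmes]
    congr 1
    refine Finset.filter_congr fun e he => ?_
    rw [hf e he]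
  funext a b
  rw [recover hc1 hspd1 hend1, recover hc2 hspd2 hend2, hP, hM]

end Final

/-- For every simple `d`-regular bipartite graph `G` and `1 ≤ k ≤ 𝔪`,
the number of multigraphs `G' ∈ Cat_{n,d}(k)` with `G ∈ SN(G')` is at least
`(nd − Z(G) − 2kd³)^k / k! · (d−1)^{2k}` and at most `C(nd,k) · (d−1)^{2k}`. -/
theorem stmt7 (n d k : ℕ) (hd : 3 ≤ d) (hk : 1 ≤ k)
    (hm : k ≤ d ^ 2 * ⌊Real.log (n : ℝ)⌋₊)
    (A : Fin n → Fin n → ℕ) (hAreg : IsReg n d A) (hAs : IsSimpleG A) :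
    ((n * d - Zae A - 2 * k * d ^ 3 : ℕ) : ℝ) ^ k / (Nat.factorial k : ℝ) *
        ((d - 1 : ℕ) : ℝ) ^ (2 * k) ≤
      (({A' | InCat n d k A' ∧ A ∈ SN A'} : Set (Fin n → Fin n → ℕ)).ncard : ℝ) ∧
    ({A' | InCat n d k A' ∧ A ∈ SN A'} : Set (Fin n → Fin n → ℕ)).ncard ≤
      Nat.choose (n * d) k * (d - 1) ^ (2 * k) := by
  classical
  set Ω : Set (Fin n → Fin n → ℕ) := {A' | InCat n d k A' ∧ A ∈ SN A'} with hΩ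
  set c : ℕ := (d - 1) * (d - 1) with hc
  -- auxiliary vertex sets
  set S1 : Fin n × Fin n → Finset (Fin n) :=
    fun e => univ.filter fun i' => 0 < A i' e.2 ∧ i' ≠ e.1 with hS1
  set S2 : Fin n × Fin n → Finset (Fin n) :=
    fun e => univ.filter fun j' => 0 < A e.1 j' ∧ j' ≠ e.2 with hS2
  set pick : Finset (Fin n × Fin n) → (Fin n × Fin n) → Finset (Fin n × Fin n) :=
    fun M e => if e ∈ M then S1 e ×ˢ S2 e else {e} with hpick
  set T : Finset (Finset (Fin n × Fin n) × ((Fin n × Fin n) → Fin n × Fin n)) :=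
    ((Edges A).powersetCard k).biUnion
      (fun M => ({M} : Finset (Finset (Fin n × Fin n))) ×ˢ Fintype.piFinset (pick M)) with hT
  -- cardinality of the target
  have hTcard : T.card ≤ (n * d).choose k * c ^ k := by
    rw [hT]
    refine le_trans card_biUnion_le ?_
    have hbound : ∀ M ∈ (Edges A).powersetCard k,
        (({M} : Finset (Finset (Fin n × Fin n))) ×ˢ Fintype.piFinset (pick M)).card ≤ c ^ k := by
      intro M hM
      rw [Finset.mem_powersetCard] at hM
      rw [card_product, card_singleton, one_mul, Fintype.card_piFinset]
      have hcards : ∀ e : Fin n × Fin n, (pick M e).card =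
          if e ∈ M then (S1 e ×ˢ S2 e).card else 1 := by
        intro e
        rw [hpick]
        by_cases h : e ∈ M <;> simp [h]
      calc ∏ e : Fin n × Fin n, (pick M e).card
          = ∏ e : Fin n × Fin n, (if e ∈ M then (S1 e ×ˢ S2 e).card else 1) :=
            Finset.prod_congr rfl fun e _ => hcards e
        _ = ∏ e ∈ M, (S1 e ×ˢ S2 e).card := by
            rw [Finset.prod_ite_mem, Finset.univ_inter]
        _ ≤ ∏ _e ∈ M, c := by
            refine Finset.prod_le_prod' fun e he => ?_
            have heE : 0 < A e.1 e.2 := by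
              have := hM.1 he
              simpa [Edges] using this
            rw [card_product, hS1, hS2, colcard_ne hAreg hAs e.1 e.2 heE,
              rowcard_ne hAreg hAs e.1 e.2 heE]
        _ = c ^ k := by rw [Finset.prod_const, hM.2]
    calc ∑ M ∈ (Edges A).powersetCard k,
          (({M} : Finset (Finset (Fin n × Fin n))) ×ˢ Fintype.piFinset (pick M)).card
        ≤ ∑ _M ∈ (Edges A).powersetCard k, c ^ k := Finset.sum_le_sum hbound
      _ = ((Edges A).powersetCard k).card * c ^ k := by rw [sum_const, smul_eq_mul]
      _ = (n * d).choose k * c ^ k := by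
          rw [Finset.card_powersetCard, edges_card hAreg hAs]
  -- the encoding map
  set F : (Fin n → Fin n → ℕ) → (Fin n × Fin n → Fin n × Fin n) :=
    fun A' => if h : A ∈ SN A' then Classical.choose h else id with hF
  have hFspec : ∀ A' ∈ Ω, SimplePathData A' (F A') ∧ A = endpointM A' (F A') := by
    intro A' hA'
    obtain ⟨hcA, hsn⟩ := hA'
    rw [hF]
    simp only [dif_pos hsn]
    exact ⟨(Classical.choose_spec hsn).1, (Classical.choose_spec hsn).2⟩
  set Ψ : (Fin n → Fin n → ℕ) → Finset (Fin n × Fin n) × ((Fin n × Fin n) → Fin n × Fin n) :=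
    fun A' => (MEs A', fun e => if e ∈ MEs A' then F A' e else e) with hΨ
  have hmesk : ∀ A' ∈ Ω, (MEs A').card = k := fun A' hA' => hA'.1.2.2.1
  have hmaps : ∀ A' ∈ Ω, Ψ A' ∈ T := by
    intro A' hA'
    obtain ⟨hspd, hend⟩ := hFspec A' hA'
    have hcA := hA'.1
    rw [hT, Finset.mem_biUnion]
    refine ⟨MEs A', ?_, ?_⟩
    · rw [Finset.mem_powersetCard]
      refine ⟨fun e he => ?_, hmesk A' hA'⟩
      have := mes_edge hcA hspd hend he
      simp [Edges, this]
    · rw [Finset.mem_product]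
      refine ⟨by simp [hΨ], ?_⟩
      rw [Fintype.mem_piFinset]
      intro e
      rw [hΨ, hpick]
      by_cases h : e ∈ MEs A'
      · simp only [h, if_pos]
        rw [Finset.mem_product]
        constructor
        · rw [hS1]
          simp only [mem_filter, mem_univ, true_and]
          exact mes_aux_col hcA hspd hend h
        · rw [hS2]
          simp only [mem_filter, mem_univ, true_and]
          exact mes_aux_row hcA hspd hend h
      · simp only [h, if_neg, if_false]
        simp
  have hinjΨ : Set.InjOn Ψ Ω := by
    intro A1 h1 A2 h2 heq
    obtain ⟨hspd1, hend1⟩ := hFspec A1 h1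
    obtain ⟨hspd2, hend2⟩ := hFspec A2 h2
    have hmes : MEs A1 = MEs A2 := congrArg Prod.fst heq
    have hfs : ∀ e ∈ MEs A1, F A1 e = F A2 e := by
      intro e he
      have := congrArg Prod.snd heq
      have h3 := congrFun this e
      simp only [hΨ] at h3
      rw [if_pos he, if_pos (hmes ▸ he)] at h3
      exact h3
    exact psi_inj h1.1 hspd1 hend1 h2.1 hspd2 hend2 hmes hfs
  have himg : Ψ '' Ω ⊆ (T : Set _) := by
    rintro x ⟨A', hA', rfl⟩
    exact hmaps A' hA'
  have hfin : Ω.Finite :=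
    Set.Finite.of_finite_image (Set.Finite.subset T.finite_toSet himg) hinjΨ
  have hupper : Ω.ncard ≤ T.card := by
    calc Ω.ncard = (Ψ '' Ω).ncard := (Set.ncard_image_of_injOn hinjΨ).symm
      _ ≤ (T : Set _).ncard := Set.ncard_le_ncard himg T.finite_toSet
      _ = T.card := Set.ncard_coe_finset T
  -- lower bound
  set 𝒮 : Finset (Finset ((Fin n × Fin n) × Fin n × Fin n)) :=
    ((GQuad A).powersetCard k).filter
      (fun S => ∀ a ∈ S, ∀ b ∈ S, a ≠ b → Compat a b) with h𝒮
  have hgood : ∀ S ∈ 𝒮, GoodFam A S ∧ S.card = k := by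
    intro S hS
    rw [h𝒮, mem_filter, Finset.mem_powersetCard] at hS
    exact ⟨⟨hS.1.1, hS.2⟩, hS.1.2⟩
  have hΦmaps : ∀ S ∈ 𝒮, buildM A S ∈ Ω := by
    intro S hS
    obtain ⟨hG, hcard⟩ := hgood S hS
    refine ⟨hcard ▸ build_incat hAreg hAs hG, ?_⟩
    exact ⟨fOf S, build_spd hAs hG, build_endpoint hAs hG⟩
  have hΦinj : Set.InjOn (buildM A) ↑𝒮 := by
    intro S hS T' hT' heq
    exact build_inj hAs (hgood S hS).1 (hgood T' (by simpa using hT')).1 heq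
  have hlower : 𝒮.card ≤ Ω.ncard := by
    have h1 : (buildM A '' ↑𝒮).ncard = 𝒮.card := by
      rw [Set.ncard_image_of_injOn hΦinj, Set.ncard_coe_finset]
    rw [← h1]
    refine Set.ncard_le_ncard ?_ hfin
    rintro x ⟨S, hS, rfl⟩
    exact hΦmaps S (by simpa using hS)
  -- greedy count
  have hblocked : ∀ q, ((GQuad A).filter fun r => ¬ Compat q r).card ≤ 2 * d ^ 3 * c := by
    intro q
    refine le_trans (blocked_total hAreg hAs q) ?_
    have h4 : 4 ≤ c := by
      rw [hc]
      have : 2 ≤ d - 1 := by omega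
      calc 4 = 2 * 2 := rfl
        _ ≤ (d - 1) * (d - 1) := Nat.mul_le_mul this this
    calc 8 * (d * d * d) = 2 * (d * d * d) * 4 := by ring
      _ ≤ 2 * (d * d * d) * c := Nat.mul_le_mul_left _ h4
      _ = 2 * d ^ 3 * c := by ring
  have hgreedy := greedy (GQuad A) Compat (fun a b h => compat_symm h) compat_irrefl
    (2 * d ^ 3 * c) hblocked k
  have hQc : (n * d - Zae A) * c ≤ (GQuad A).card := by
    rw [← goodE_card hAreg hAs]
    exact gq_card_ge hAreg hAs
  have hkeyN : ((n * d - Zae A - 2 * k * d ^ 3) * c) ^ k ≤ k.factorial * 𝒮.card := by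
    refine le_trans (Nat.pow_le_pow_left ?_ k) hgreedy
    calc (n * d - Zae A - 2 * k * d ^ 3) * c
        = (n * d - Zae A) * c - 2 * k * d ^ 3 * c := by rw [Nat.sub_mul]
      _ ≤ (GQuad A).card - k * (2 * d ^ 3 * c) :=
          tsub_le_tsub hQc (le_of_eq (by ring))
  constructor
  · -- lower bound, real version
    rw [div_mul_eq_mul_div, div_le_iff₀ (by positivity : (0:ℝ) < (k.factorial : ℝ))]
    have hpow : ((d - 1 : ℕ) : ℝ) ^ (2 * k) = ((c : ℕ) : ℝ) ^ k := by
      rw [hc]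
      push_cast
      rw [pow_mul]
      ring_nf
    rw [hpow]
    have : ((n * d - Zae A - 2 * k * d ^ 3 : ℕ) : ℝ) ^ k * ((c : ℕ) : ℝ) ^ k
        = (((n * d - Zae A - 2 * k * d ^ 3) * c) ^ k : ℕ) := by
      push_cast
      rw [mul_pow]
    rw [this]
    have hN : (((n * d - Zae A - 2 * k * d ^ 3) * c) ^ k : ℕ) ≤ Ω.ncard * k.factorial := by
      calc ((n * d - Zae A - 2 * k * d ^ 3) * c) ^ k ≤ k.factorial * 𝒮.card := hkeyN
        _ ≤ k.factorial * Ω.ncard := Nat.mul_le_mul_left _ hlower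
        _ = Ω.ncard * k.factorial := Nat.mul_comm _ _
    exact_mod_cast hN
  · -- upper bound
    have hpow : (d - 1) ^ (2 * k) = c ^ k := by
      rw [hc, pow_mul, pow_two]
    rw [hpow]
    exact le_trans hupper hTcard
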